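/- Let m be a positive integer and let f be a holomorphic function on the open unit disk in ℂ that extends continuously to the closed disk. Suppose that the boundary Fourier coefficients ∫₀^{2π} f(e^{iθ})·e^{−ikθ} dθ vanish for every integer k ≥ m. Then f is a polynomial of degree at most m − 1; i.e., there exist a₀, …, a_{m−1} ∈ ℂ with f(z) = a₀ + a₁z + ⋯ + a_{m−1}z^{m−1} for all z in the disk. -/

import Mathlib

open Complex Metric

/-- A holomorphic function on the unit disk, continuous up to the boundary, whose
boundary Fourier coefficients vanish for all modes `k ≥ m`, is a polynomial of degree
at most `m − 1`. -/
theorem stmt17 (m : ℕ) (hm : 0 < m) (f : ℂ → ℂ)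
    (hf : DifferentiableOn ℂ f (Metric.ball 0 1))
    (hc : ContinuousOn f (Metric.closedBall 0 1))
    (hcoef : ∀ k : ℤ, (m : ℤ) ≤ k →
      ∫ θ in (0:ℝ)..(2 * Real.pi),
        f (Complex.exp ((θ : ℂ) * Complex.I)) *
          Complex.exp (-(k : ℂ) * (θ : ℂ) * Complex.I) = 0) :
    ∃ a : ℕ → ℂ, ∀ z ∈ Metric.ball (0 : ℂ) 1,
      f z = ∑ j ∈ Finset.range m, a j * z ^ j := by
  set p := cauchyPowerSeries f 0 1 with hp
  have hdc : DiffContOnCl ℂ f (ball (0:ℂ) 1) :=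
    ⟨hf, by rwa [closure_ball (0:ℂ) one_ne_zero]⟩
  have hball : HasFPowerSeriesOnBall f p 0 1 := by
    have := hdc.hasFPowerSeriesOnBall (R := 1) one_pos
    simpa using this
  refine ⟨fun j => p.coeff j, fun z hz => ?_⟩
  have key : ∀ n : ℕ, m ≤ n → (p n fun _ => z) = 0 := by
    intro n hn
    have h0 := hcoef (n : ℤ) (by exact_mod_cast hn)
    push_cast at h0
    rw [hp, cauchyPowerSeries_apply]
    have hint : (∮ w in C((0:ℂ), 1), (z / (w - 0)) ^ n • (w - 0)⁻¹ • f w)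
        = (z ^ n * I) * ∫ θ in (0:ℝ)..(2 * Real.pi),
            f (Complex.exp ((θ:ℂ) * I)) * Complex.exp (-(n : ℂ) * (θ:ℂ) * I) := by
      rw [circleIntegral, ← intervalIntegral.integral_const_mul]
      apply intervalIntegral.integral_congr
      intro θ _
      have hne : Complex.exp ((θ:ℂ) * I) ≠ 0 := Complex.exp_ne_zero _
      simp only [deriv_circleMap, circleMap, ofReal_one, one_mul, zero_add, sub_zero,
        smul_eq_mul]
      have hexp : Complex.exp (-(n : ℂ) * (θ:ℂ) * I) = (Complex.exp ((θ:ℂ) * I))⁻¹ ^ n := by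
        rw [show (-(n : ℂ) * (θ:ℂ) * I) = (n : ℕ) * -((θ:ℂ) * I) by push_cast; ring,
          Complex.exp_nat_mul, Complex.exp_neg]
      rw [hexp, div_pow]
      field_simp
      rw [one_div, inv_pow, mul_right_comm _ (Complex.exp ((θ:ℂ) * I) ^ n),
        mul_inv_cancel_right₀ (pow_ne_zero n hne)]
    rw [hint, h0, mul_zero, smul_zero]
  have hsum : HasSum (fun n => p n fun _ => z) (f (0 + z)) :=
    hball.hasSum (by rw [EMetric.mem_ball, edist_dist, ENNReal.ofReal_lt_one]; simpa using hz)
  have hfin : HasSum (fun n => p n fun _ => z)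
      (∑ j ∈ Finset.range m, (p j fun _ => z)) :=
    hasSum_sum_of_ne_finset_zero (fun n hn => key n (by simpa using hn))
  have := hsum.unique hfin
  rw [zero_add] at this
  rw [this]
  refine Finset.sum_congr rfl fun j _ => ?_
  rw [p.apply_eq_pow_smul_coeff, smul_eq_mul, mul_comm]
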